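/- Let G be an η-good graph on n vertices (with 1/n ≪ η ≤ 1) and let X, Y ⊆ V(G) be non-empty with no edge of G between X and Y. Then |X| + |Y| < (2/3 − η)n. -/

import Mathlib

/-- In an `η`-good graph `G` on `n` vertices, if `X,Y` are nonempty
vertex sets with no edge of `G` between `X` and `Y`, then `|X| + |Y| < (2/3 − η)n`. -/
theorem stmt7 (η : ℝ) (hη0 : 0 < η) (hη1 : η ≤ 1) :
    ∃ n₀ : ℕ, ∀ n : ℕ, n₀ ≤ n →
    ∀ G : SimpleGraph (Fin n),
      (∀ X : Finset (Fin n), 1 ≤ X.card → 3 * X.card ≤ n →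
        ∃ x ∈ X, ((G.neighborSet x).ncard : ℝ) ≥ (1/3 + η) * n + X.card + 1) →
      ∀ X Y : Finset (Fin n), X.Nonempty → Y.Nonempty →
        (∀ x ∈ X, ∀ y ∈ Y, ¬ G.Adj x y) →
        (X.card : ℝ) + Y.card < (2/3 - η) * n := by
  refine ⟨3, ?_⟩
  intro n hn G hgood X Y hX hY hXY
  have hYn : Y.card ≤ n := by simpa using Y.card_le_univ
  have hXn : X.card ≤ n := by simpa using X.card_le_univ
  have hn3 : (3 : ℝ) ≤ (n : ℝ) := by exact_mod_cast hn
  have key : ∀ Z : Finset (Fin n), Z.card ≤ n →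
      (∀ x ∈ X, ∀ z ∈ Z, ¬ G.Adj x z) →
      ∀ x ∈ X, ((G.neighborSet x).ncard : ℝ) ≤ (n : ℝ) - Z.card := by
    intro Z hZn hnoadj x hx
    have hsub : G.neighborSet x ⊆ ↑(Zᶜ : Finset (Fin n)) := by
      intro z hz
      simp only [Finset.coe_compl, Set.mem_compl_iff, Finset.mem_coe]
      intro hzZ
      exact hnoadj x hx z hzZ hz
    have h1 : (G.neighborSet x).ncard ≤ (Zᶜ : Finset (Fin n)).card := by
      rw [← Set.ncard_coe_finset (Zᶜ : Finset (Fin n))]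
      exact Set.ncard_le_ncard hsub (Finset.finite_toSet _)
    have h2 : (Zᶜ : Finset (Fin n)).card = n - Z.card := by
      simp [Finset.card_compl]
    rw [h2] at h1
    have := (Nat.cast_le (α := ℝ)).2 h1
    rwa [Nat.cast_sub hZn] at this
  have keyX : ∀ x ∈ X, ((G.neighborSet x).ncard : ℝ) ≤ (n : ℝ) - Y.card :=
    key Y hYn hXY
  have keyY : ∀ y ∈ Y, ((G.neighborSet y).ncard : ℝ) ≤ (n : ℝ) - X.card := by
    intro y hy
    have hsub : G.neighborSet y ⊆ ↑(Xᶜ : Finset (Fin n)) := by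
      intro x hx
      simp only [Finset.coe_compl, Set.mem_compl_iff, Finset.mem_coe]
      intro hxX
      exact hXY x hxX y hy (G.adj_symm hx)
    have h1 : (G.neighborSet y).ncard ≤ (Xᶜ : Finset (Fin n)).card := by
      rw [← Set.ncard_coe_finset (Xᶜ : Finset (Fin n))]
      exact Set.ncard_le_ncard hsub (Finset.finite_toSet _)
    have h2 : (Xᶜ : Finset (Fin n)).card = n - X.card := by
      simp [Finset.card_compl]
    rw [h2] at h1
    have := (Nat.cast_le (α := ℝ)).2 h1
    rwa [Nat.cast_sub hXn] at this
  have hηn : η * 3 ≤ η * n := mul_le_mul_of_nonneg_left hn3 hη0.le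
  by_cases h3X : 3 * X.card ≤ n
  · obtain ⟨x, hx, hd⟩ := hgood X hX.card_pos h3X
    have h := keyX x hx
    have hY0 : (0 : ℝ) ≤ Y.card := by positivity
    linarith
  · by_cases h3Y : 3 * Y.card ≤ n
    · obtain ⟨y, hy, hd⟩ := hgood Y hY.card_pos h3Y
      have h := keyY y hy
      have hX0 : (0 : ℝ) ≤ X.card := by positivity
      linarith
    · -- both |X| and |Y| exceed n/3
      have hXbig : n < 3 * X.card := by omega
      have hYbig : n < 3 * Y.card := by omega
      have hdivX : n / 3 ≤ X.card := by omega
      have hdivY : n / 3 ≤ Y.card := by omega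
      obtain ⟨X', hX'sub, hX'card⟩ := Finset.exists_subset_card_eq hdivX
      obtain ⟨Y', hY'sub, hY'card⟩ := Finset.exists_subset_card_eq hdivY
      have h1X : 1 ≤ X'.card := by omega
      have h3X' : 3 * X'.card ≤ n := by omega
      have h1Y : 1 ≤ Y'.card := by omega
      have h3Y' : 3 * Y'.card ≤ n := by omega
      obtain ⟨x, hx, hdx⟩ := hgood X' h1X h3X'
      obtain ⟨y, hy, hdy⟩ := hgood Y' h1Y h3Y'
      have hkx := keyX x (hX'sub hx)
      have hky := keyY y (hY'sub hy)
      rw [hX'card] at hdx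
      rw [hY'card] at hdy
      have hfloor : (n : ℝ) ≤ 3 * ((n / 3 : ℕ) : ℝ) + 2 := by
        have : n ≤ 3 * (n / 3) + 2 := by omega
        exact_mod_cast this
      linarith
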